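/- arXiv:1809.05569 — 2 statements merged into one kernel-verified Lean document; each statement's English description precedes it below -/
import Mathlib

section
/- Let x be an automorphism of prime order p of a finite generalized quadrangle Q of order (s,t), and assume that x fixes no point and fixes no line. Then either (p divides s+1 and p divides t+1) or p divides st+1. Moreover, if p is odd, then (p divides s+1 and p divides t+1) holds if and only if p does not divide st+1. -/
/-- `IsGQ I s t` : the incidence relation `I` between the (finite) point type `P`
and line type `L` is a finite generalized quadrangle of order `(s,t)`. -/
structure IsGQ {P L : Type*} (I : P → L → Prop) (s t : ℕ) : Prop where
  finP : Finite P
  finL : Finite L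
  s_pos : 0 < s
  t_pos : 0 < t
  line_pts : ∀ ℓ : L, Nat.card {p : P // I p ℓ} = s + 1
  pt_lines : ∀ p : P, Nat.card {ℓ : L // I p ℓ} = t + 1
  unique_line : ∀ p q : P, p ≠ q → Nat.card {ℓ : L // I p ℓ ∧ I q ℓ} ≤ 1
  gq_axiom : ∀ (p : P) (ℓ : L), ¬ I p ℓ →
      ∃! pl : P × L, I p pl.2 ∧ I pl.1 pl.2 ∧ I pl.1 ℓ

/-- An automorphism of the incidence structure `I` : a pair of permutations of the
points and of the lines preserving incidence. -/
@[ext] structure GQAut {P L : Type*} (I : P → L → Prop) where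
  permP : Equiv.Perm P
  permL : Equiv.Perm L
  pres : ∀ p ℓ, I (permP p) (permL ℓ) ↔ I p ℓ

namespace GQAut

variable {P L : Type*} {I : P → L → Prop}

instance : Group (GQAut I) where
  mul x y := ⟨x.permP * y.permP, x.permL * y.permL, by
    intro p ℓ
    simp only [Equiv.Perm.mul_apply]
    rw [x.pres, y.pres]⟩
  one := ⟨1, 1, fun p ℓ => Iff.rfl⟩
  inv x := ⟨x.permP⁻¹, x.permL⁻¹, by
    intro p ℓ
    simpa using (x.pres (x.permP⁻¹ p) (x.permL⁻¹ ℓ)).symm⟩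
  mul_assoc a b c := by ext <;> rfl
  one_mul a := by ext <;> rfl
  mul_one a := by ext <;> rfl
  inv_mul_cancel a := by
    ext z
    · show a.permP⁻¹ (a.permP z) = z
      simp
    · show a.permL⁻¹ (a.permL z) = z
      simp

end GQAut

/-- Two points are collinear if some line is incident with both. -/
def Collin {P L : Type*} (I : P → L → Prop) (p q : P) : Prop := ∃ ℓ, I p ℓ ∧ I q ℓ

/-- Two lines are concurrent if some point is incident with both. -/
def Concur {P L : Type*} (I : P → L → Prop) (ℓ m : L) : Prop := ∃ p, I p ℓ ∧ I p m

/-- Number of points fixed by the automorphism `x`. -/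
noncomputable def alpha0 {P L : Type*} {I : P → L → Prop} (x : GQAut I) : ℕ :=
  Nat.card {p : P // x.permP p = p}

/-- Number of points moved by `x` to a distinct collinear point. -/
noncomputable def alpha1 {P L : Type*} {I : P → L → Prop} (x : GQAut I) : ℕ :=
  Nat.card {p : P // x.permP p ≠ p ∧ Collin I p (x.permP p)}

/-- Number of points sent by `x` to a noncollinear point. -/
noncomputable def alpha2 {P L : Type*} {I : P → L → Prop} (x : GQAut I) : ℕ :=
  Nat.card {p : P // ¬ Collin I p (x.permP p)}

/-- Number of lines fixed by the automorphism `x`. -/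
noncomputable def beta0 {P L : Type*} {I : P → L → Prop} (x : GQAut I) : ℕ :=
  Nat.card {ℓ : L // x.permL ℓ = ℓ}

/-- Number of lines moved by `x` to a distinct concurrent line. -/
noncomputable def beta1 {P L : Type*} {I : P → L → Prop} (x : GQAut I) : ℕ :=
  Nat.card {ℓ : L // x.permL ℓ ≠ ℓ ∧ Concur I ℓ (x.permL ℓ)}

/-- Number of lines sent by `x` to a nonconcurrent line. -/
noncomputable def beta2 {P L : Type*} {I : P → L → Prop} (x : GQAut I) : ℕ :=
  Nat.card {ℓ : L // ¬ Concur I ℓ (x.permL ℓ)}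

/-- The automorphism group is transitive on points. -/
def PointTransitive {P L : Type*} (I : P → L → Prop) : Prop :=
  ∀ p q : P, ∃ x : GQAut I, x.permP p = q

/-- The automorphism group is transitive on lines. -/
def LineTransitive {P L : Type*} (I : P → L → Prop) : Prop :=
  ∀ ℓ m : L, ∃ x : GQAut I, x.permL ℓ = m

/-- The fixed substructure of `x` has type (2): there is a fixed point `P₀` collinear
with every fixed point, at least one line is fixed, and every fixed line passes through `P₀`. -/
def FixedType2 {P L : Type*} (I : P → L → Prop) (x : GQAut I) : Prop :=
  ∃ P₀ : P, x.permP P₀ = P₀ ∧ (∀ p, x.permP p = p → Collin I P₀ p) ∧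
    (∃ ℓ, x.permL ℓ = ℓ) ∧ (∀ ℓ, x.permL ℓ = ℓ → I P₀ ℓ)

/-- The fixed substructure of `x` has type (2'): there is a fixed line `ℓ₀` concurrent
with every fixed line, at least one point is fixed, and every fixed point lies on `ℓ₀`. -/
def FixedType2' {P L : Type*} (I : P → L → Prop) (x : GQAut I) : Prop :=
  ∃ ℓ₀ : L, x.permL ℓ₀ = ℓ₀ ∧ (∀ ℓ, x.permL ℓ = ℓ → Concur I ℓ₀ ℓ) ∧
    (∃ p, x.permP p = p) ∧ (∀ p, x.permP p = p → I p ℓ₀)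

/-- The fixed substructure of `x` (fixed points and fixed lines with induced incidence)
is a generalized subquadrangle of order `(s', t')`. -/
def FixedSubGQ {P L : Type*} (I : P → L → Prop) (x : GQAut I) (s' t' : ℕ) : Prop :=
  IsGQ (fun (p : {p : P // x.permP p = p}) (ℓ : {ℓ : L // x.permL ℓ = ℓ}) => I p.1 ℓ.1) s' t'

section AuxLemmas

open MulAction

/-- A fixed-point-free permutation satisfying `σ ^ p = 1` for a prime `p` forces
`p` to divide the cardinality. -/
private lemma card_dvd_of_fpf {α : Type*} [Finite α] {p : ℕ} (hp : p.Prime)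
    (σ : Equiv.Perm α) (h1 : σ ^ p = 1) (h2 : ∀ a, σ a ≠ a) : p ∣ Nat.card α := by
  cases isEmpty_or_nonempty α with
  | inl h => simp [Nat.card_of_isEmpty]
  | inr h =>
    have hσ1 : σ ≠ 1 := by
      intro hc
      obtain ⟨a⟩ := h
      exact h2 a (by simp [hc])
    have hord : orderOf σ = p := by
      rcases hp.eq_one_or_self_of_dvd _ (orderOf_dvd_of_pow_eq_one h1) with hc | hc
      · exact absurd (orderOf_eq_one_iff.mp hc) hσ1
      · exact hc
    haveI : Fact p.Prime := ⟨hp⟩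
    have hpg : IsPGroup p (Subgroup.zpowers σ) := by
      apply IsPGroup.of_card (n := 1)
      rw [Nat.card_zpowers, hord, pow_one]
    have hfix : IsEmpty (fixedPoints (Subgroup.zpowers σ) α) := by
      refine ⟨fun x => ?_⟩
      have hx := x.2 ⟨σ, Subgroup.mem_zpowers σ⟩
      exact h2 x.1 hx
    have hmod := hpg.card_modEq_card_fixedPoints α
    have hz : Nat.card ↑(MulAction.fixedPoints (Subgroup.zpowers σ) α) = 0 :=
      @Nat.card_of_isEmpty _ hfix
    rw [hz] at hmod
    exact (Nat.modEq_zero_iff_dvd.mp hmod)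

/-- Removing one element from a subtype. -/
private lemma card_sub_ne {α : Type*} [Finite α] (Q : α → Prop) (a : α) (ha : Q a) :
    Nat.card {x : α // Q x ∧ x ≠ a} + 1 = Nat.card {x : α // Q x} := by
  classical
  have := Fintype.ofFinite α
  have e : {x : α // Q x} ≃ {x : α // Q x ∧ x ≠ a} ⊕ Unit := by
    refine ⟨fun y => if hy : y.1 = a then Sum.inr () else Sum.inl ⟨y.1, y.2, hy⟩,
      fun z => Sum.rec (fun w => ⟨w.1, w.2.1⟩) (fun _ => ⟨a, ha⟩) z, fun y => ?_, fun z => ?_⟩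
    · by_cases hy : y.1 = a
      · simp only [hy, dif_pos]
        exact Subtype.ext hy.symm
      · simp only [hy, dif_neg, not_false_iff]
    · cases z with
      | inl w => simp [w.2.2]
      | inr u => simp
  rw [Nat.card_congr e, Nat.card_sum]
  simp

/-- Counting the points of a GQ of order `(s,t)`. -/
private lemma card_points_of_gq {P L : Type*} {I : P → L → Prop} {s t : ℕ}
    (h : IsGQ I s t) (ℓ₀ : L) : Nat.card P = (s + 1) * (s * t + 1) := by
  haveI := h.finP
  haveI := h.finL
  classical
  haveI := Fintype.ofFinite P
  haveI := Fintype.ofFinite L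
  set T : Type _ := {a : P × L × P //
      I a.1 ℓ₀ ∧ I a.1 a.2.1 ∧ a.2.1 ≠ ℓ₀ ∧ I a.2.2 a.2.1 ∧ a.2.2 ≠ a.1} with hT
  -- structural re-packaging of `T` as an iterated sigma type
  have e1 : T ≃ Σ (a : {q : P // I q ℓ₀}),
      Σ (m : {m : L // I a.1 m ∧ m ≠ ℓ₀}), {q : P // I q m.1 ∧ q ≠ a.1} :=
    ⟨fun x => ⟨⟨x.1.1, x.2.1⟩, ⟨x.1.2.1, x.2.2.1, x.2.2.2.1⟩,
        ⟨x.1.2.2, x.2.2.2.2.1, x.2.2.2.2.2⟩⟩,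
     fun y => ⟨(y.1.1, y.2.1.1, y.2.2.1),
        y.1.2, y.2.1.2.1, y.2.1.2.2, y.2.2.2.1, y.2.2.2.2⟩,
     fun x => rfl, fun y => rfl⟩
  have hTcard : Nat.card T = (s + 1) * (t * s) := by
    rw [Nat.card_congr e1, Nat.card_eq_fintype_card, Fintype.card_sigma]
    have hinner : ∀ (a : {q : P // I q ℓ₀}) (m : {m : L // I a.1 m ∧ m ≠ ℓ₀}),
        Fintype.card {q : P // I q m.1 ∧ q ≠ a.1} = s := by
      intro a m
      have h' : Nat.card {q : P // I q m.1 ∧ q ≠ a.1} + 1 = Nat.card {q : P // I q m.1} :=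
        card_sub_ne _ _ m.2.1
      rw [h.line_pts m.1] at h'
      rw [← Nat.card_eq_fintype_card]
      omega
    have hmid : ∀ a : {q : P // I q ℓ₀},
        Fintype.card {m : L // I a.1 m ∧ m ≠ ℓ₀} = t := by
      intro a
      have h' : Nat.card {m : L // I a.1 m ∧ m ≠ ℓ₀} + 1 = Nat.card {m : L // I a.1 m} :=
        card_sub_ne _ _ a.2
      rw [h.pt_lines a.1] at h'
      rw [← Nat.card_eq_fintype_card]
      omega
    calc ∑ a : {q : P // I q ℓ₀},
          Fintype.card (Σ (m : {m : L // I a.1 m ∧ m ≠ ℓ₀}), {q : P // I q m.1 ∧ q ≠ a.1})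
        = ∑ a : {q : P // I q ℓ₀}, t * s := by
          refine Finset.sum_congr rfl fun a _ => ?_
          rw [Fintype.card_sigma]
          calc ∑ m : {m : L // I a.1 m ∧ m ≠ ℓ₀}, Fintype.card {q : P // I q m.1 ∧ q ≠ a.1}
              = ∑ _m : {m : L // I a.1 m ∧ m ≠ ℓ₀}, s :=
                Finset.sum_congr rfl fun m _ => hinner a m
            _ = t * s := by rw [Finset.sum_const, Finset.card_univ, hmid a, smul_eq_mul]
      _ = (s + 1) * (t * s) := by
          rw [Finset.sum_const, Finset.card_univ, smul_eq_mul, ← Nat.card_eq_fintype_card,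
            h.line_pts ℓ₀]
  -- `T` is in bijection with the points not on `ℓ₀`
  have e2 : T ≃ {q : P // ¬ I q ℓ₀} := by
    have hwd : ∀ x : T, ¬ I x.1.2.2 ℓ₀ := by
      rintro ⟨⟨r, m, q⟩, h1, h2, h3, h4, h5⟩ hon
      have hnt : Nontrivial {n : L // I q n ∧ I r n} :=
        ⟨⟨⟨ℓ₀, hon, h1⟩, ⟨m, h4, h2⟩, fun hc => h3 (congrArg Subtype.val hc).symm⟩⟩
      have := Finite.one_lt_card (α := {n : L // I q n ∧ I r n})
      have := h.unique_line q r h5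
      omega
    refine Equiv.ofBijective (fun x => ⟨x.1.2.2, hwd x⟩) ⟨?_, ?_⟩
    · intro x y hxy
      have hq : x.1.2.2 = y.1.2.2 := congrArg Subtype.val hxy
      obtain ⟨⟨rx, mx, qx⟩, hx1, hx2, hx3, hx4, hx5⟩ := x
      obtain ⟨⟨ry, my, qy⟩, hy1, hy2, hy3, hy4, hy5⟩ := y
      simp only at hq
      subst hq
      have hEU := h.gq_axiom qx ℓ₀ (hwd ⟨(rx, mx, qx), hx1, hx2, hx3, hx4, hx5⟩)
      have hpair : ((rx, mx) : P × L) = (ry, my) :=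
        hEU.unique ⟨hx4, hx2, hx1⟩ ⟨hy4, hy2, hy1⟩
      have h1 : rx = ry := congrArg Prod.fst hpair
      have h2 : mx = my := congrArg Prod.snd hpair
      subst h1; subst h2
      rfl
    · rintro ⟨q, hq⟩
      obtain ⟨⟨r, m⟩, ⟨h1, h2, h3⟩, -⟩ := h.gq_axiom q ℓ₀ hq
      have hm : m ≠ ℓ₀ := fun hc => hq (hc ▸ h1)
      have hqr : q ≠ r := fun hc => hq (hc ▸ h3)
      exact ⟨⟨(r, m, q), h3, h2, hm, h1, hqr⟩, rfl⟩
  have hsplit : Nat.card P = Nat.card {q : P // I q ℓ₀} + Nat.card {q : P // ¬ I q ℓ₀} := by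
    rw [← Nat.card_sum, Nat.card_congr (Equiv.sumCompl (fun q : P => I q ℓ₀))]
  rw [hsplit, h.line_pts ℓ₀, ← Nat.card_congr e2, hTcard]
  ring

/-- The point–line dual of a GQ of order `(s,t)` is a GQ of order `(t,s)`. -/
private lemma IsGQ.dual {P L : Type*} {I : P → L → Prop} {s t : ℕ} (h : IsGQ I s t) :
    IsGQ (fun (ℓ : L) (p : P) => I p ℓ) t s where
  finP := h.finL
  finL := h.finP
  s_pos := h.t_pos
  t_pos := h.s_pos
  line_pts := h.pt_lines
  pt_lines := h.line_pts
  unique_line := by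
    intro ℓ m hlm
    by_contra hc
    push_neg at hc
    haveI := h.finP
    have hnt : Nontrivial {p : P // I p ℓ ∧ I p m} :=
      Finite.one_lt_card_iff_nontrivial.mp hc
    obtain ⟨⟨q, hq1, hq2⟩, ⟨r, hr1, hr2⟩, hqr⟩ := hnt
    have hqr' : q ≠ r := fun hc' => hqr (Subtype.ext hc')
    have hnt2 : Nontrivial {n : L // I q n ∧ I r n} :=
      ⟨⟨⟨ℓ, hq1, hr1⟩, ⟨m, hq2, hr2⟩, fun hc' => hlm (congrArg Subtype.val hc')⟩⟩
    haveI := h.finL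
    have := Finite.one_lt_card (α := {n : L // I q n ∧ I r n})
    have := h.unique_line q r hqr'
    omega
  gq_axiom := by
    intro ℓ q hq
    obtain ⟨⟨r, m⟩, ⟨h1, h2, h3⟩, huniq⟩ := h.gq_axiom q ℓ hq
    refine ⟨(m, r), ⟨h3, h2, h1⟩, ?_⟩
    rintro ⟨m', r'⟩ ⟨h1', h2', h3'⟩
    have := huniq (r', m') ⟨h3', h2', h1'⟩
    have ha : r' = r := congrArg Prod.fst this
    have hb : m' = m := congrArg Prod.snd this
    simp [ha, hb]

private lemma GQAut.permP_pow {P L : Type*} {I : P → L → Prop} (x : GQAut I) (n : ℕ) :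
    (x ^ n).permP = x.permP ^ n := by
  induction n with
  | zero => rfl
  | succ n ih => rw [pow_succ, pow_succ, ← ih]; rfl

private lemma GQAut.permL_pow {P L : Type*} {I : P → L → Prop} (x : GQAut I) (n : ℕ) :
    (x ^ n).permL = x.permL ^ n := by
  induction n with
  | zero => rfl
  | succ n ih => rw [pow_succ, pow_succ, ← ih]; rfl

end AuxLemmas

/-- If an automorphism x of prime order p of a GQ of order (s,t)
fixes no point and no line, then (p ∣ s+1 and p ∣ t+1) or p ∣ st+1; and if p is
odd then (p ∣ s+1 and p ∣ t+1) holds iff p does not divide st+1. -/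
theorem statement7 {P L : Type*} (I : P → L → Prop) (s t : ℕ)
    (hGQ : IsGQ I s t) (p : ℕ) (hp : p.Prime) (x : GQAut I) (hx : orderOf x = p)
    (hnoP : ∀ q : P, x.permP q ≠ q) (hnoL : ∀ ℓ : L, x.permL ℓ ≠ ℓ) :
    ((p ∣ s + 1 ∧ p ∣ t + 1) ∨ p ∣ s * t + 1) ∧
    (Odd p → ((p ∣ s + 1 ∧ p ∣ t + 1) ↔ ¬ p ∣ s * t + 1)) := by
  
  haveI := hGQ.finP
  haveI := hGQ.finL
  -- the automorphism is nontrivial since its order is prime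
  have hxne : x ≠ 1 := by
    intro hc
    rw [hc, orderOf_one] at hx
    exact hp.one_lt.ne' hx.symm
  -- both point and line sets are nonempty
  have hPL : Nonempty P ∨ Nonempty L := by
    by_contra hc
    push_neg at hc
    obtain ⟨h1, h2⟩ := hc
    apply hxne
    ext z
    · exact h1.elim z
    · exact h2.elim z
  have hNL : Nonempty L := by
    rcases hPL with hP | hL
    · obtain ⟨q⟩ := hP
      have hcard := hGQ.pt_lines q
      have : 0 < Nat.card {ℓ : L // I q ℓ} := by omega
      obtain ⟨⟨ℓ, -⟩, -⟩ := Nat.card_pos_iff.mp this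
      exact ⟨ℓ⟩
    · exact hL
  have hNP : Nonempty P := by
    obtain ⟨ℓ⟩ := hNL
    have hcard := hGQ.line_pts ℓ
    have : 0 < Nat.card {q : P // I q ℓ} := by omega
    obtain ⟨⟨q, -⟩, -⟩ := Nat.card_pos_iff.mp this
    exact ⟨q⟩
  -- cardinalities
  have hcardP : Nat.card P = (s + 1) * (s * t + 1) :=
    card_points_of_gq hGQ (Classical.arbitrary L)
  have hcardL : Nat.card L = (t + 1) * (s * t + 1) := by
    have := card_points_of_gq hGQ.dual (Classical.arbitrary P)
    rwa [mul_comm t s] at this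
  -- divisibility from the fixed-point-free action
  have hxp : x ^ p = 1 := by rw [← hx]; exact pow_orderOf_eq_one x
  have hdvdP : p ∣ (s + 1) * (s * t + 1) := by
    rw [← hcardP]
    refine card_dvd_of_fpf hp x.permP ?_ hnoP
    rw [← GQAut.permP_pow, hxp]; rfl
  have hdvdL : p ∣ (t + 1) * (s * t + 1) := by
    rw [← hcardL]
    refine card_dvd_of_fpf hp x.permL ?_ hnoL
    rw [← GQAut.permL_pow, hxp]; rfl
  have main : (p ∣ s + 1 ∧ p ∣ t + 1) ∨ p ∣ s * t + 1 := by
    by_cases hst : p ∣ s * t + 1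
    · exact Or.inr hst
    · exact Or.inl ⟨(hp.dvd_mul.mp hdvdP).resolve_right hst,
        (hp.dvd_mul.mp hdvdL).resolve_right hst⟩
  refine ⟨main, fun hodd => ⟨fun h12 hst => ?_, fun hst => main.resolve_right hst⟩⟩
  obtain ⟨h1, h2⟩ := h12
  have key : (s * t + 1) + (s + 1) + (t + 1) = (s + 1) * (t + 1) + 2 := by ring
  have hsum : p ∣ (s + 1) * (t + 1) + 2 := by
    rw [← key]
    exact dvd_add (dvd_add hst h1) h2
  have hmul : p ∣ (s + 1) * (t + 1) := h1.mul_right _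
  have h2dvd : p ∣ 2 := (Nat.dvd_add_right hmul).mp hsum
  have hp2 : p = 2 := (Nat.prime_dvd_prime_iff_eq hp Nat.prime_two).mp h2dvd
  rw [hp2] at hodd
  exact (Nat.not_odd_iff_even.mpr (by norm_num)) hodd
end

section
/- Let x be an automorphism of prime order p of a finite generalized quadrangle Q of order (s,t). If x fixes at least one point, any two distinct fixed points of x are noncollinear, and x fixes no line, then p divides t+1. Dually, if x fixes at least one line, any two distinct fixed lines of x are nonconcurrent, and x fixes no point, then p divides s+1. -/
lemma aux_perm_dvd {α : Type*} [Finite α] {p : ℕ} (hp : p.Prime) (σ : Equiv.Perm α)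
    (h : σ ^ p = 1) (hfix : ∀ a, σ a ≠ a) : p ∣ Nat.card α := by
  cases isEmpty_or_nonempty α with
  | inl h' =>
    haveI := h'
    rw [Nat.card_of_isEmpty]
    exact dvd_zero p
  | inr h' =>
    obtain ⟨a⟩ := h'
    have hσ1 : σ ≠ 1 := fun hc => hfix a (by simp [hc])
    have hord : orderOf σ = p := by
      have := orderOf_dvd_of_pow_eq_one h
      rcases (Nat.Prime.eq_one_or_self_of_dvd hp _ this) with h1 | h1
      · exact absurd (orderOf_eq_one_iff.mp h1) hσ1
      · exact h1
    haveI : Fact p.Prime := ⟨hp⟩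
    set G := Subgroup.zpowers σ
    have hcard : Nat.card G = p := by rw [Nat.card_zpowers, hord]
    have hPG : IsPGroup p G := IsPGroup.of_card (by rw [hcard, pow_one])
    have hmod := hPG.card_modEq_card_fixedPoints α
    have hempty : IsEmpty (MulAction.fixedPoints G α) := by
      constructor
      rintro ⟨b, hb⟩
      exact hfix b (hb ⟨σ, Subgroup.mem_zpowers σ⟩)
    haveI := hempty
    have h0 : Nat.card (MulAction.fixedPoints G α) = 0 := Nat.card_of_isEmpty
    rw [h0] at hmod
    exact (Nat.modEq_zero_iff_dvd).mp hmod

def GQAut.permLHom {P L : Type*} {I : P → L → Prop} : GQAut I →* Equiv.Perm L where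
  toFun := GQAut.permL
  map_one' := rfl
  map_mul' _ _ := rfl

def GQAut.permPHom {P L : Type*} {I : P → L → Prop} : GQAut I →* Equiv.Perm P where
  toFun := GQAut.permP
  map_one' := rfl
  map_mul' _ _ := rfl

/-- For an automorphism x of prime order p of a GQ of order (s,t):
if x fixes a point, all fixed points are pairwise noncollinear, and no line is
fixed, then p ∣ t+1; dually, if x fixes a line, all fixed lines are pairwise
nonconcurrent, and no point is fixed, then p ∣ s+1. -/
theorem statement8 {P L : Type*} (I : P → L → Prop) (s t : ℕ)
    (hGQ : IsGQ I s t) (p : ℕ) (hp : p.Prime) (x : GQAut I) (hx : orderOf x = p) :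
    ((∃ q : P, x.permP q = q) →
      (∀ q r : P, x.permP q = q → x.permP r = r → q ≠ r → ¬ Collin I q r) →
      (∀ ℓ : L, x.permL ℓ ≠ ℓ) → p ∣ t + 1) ∧
    ((∃ ℓ : L, x.permL ℓ = ℓ) →
      (∀ ℓ m : L, x.permL ℓ = ℓ → x.permL m = m → ℓ ≠ m → ¬ Concur I ℓ m) →
      (∀ q : P, x.permP q ≠ q) → p ∣ s + 1) := by
  have hxp : x ^ p = 1 := by rw [← hx]; exact pow_orderOf_eq_one x
  have hL : x.permL ^ p = 1 := by
    have := map_pow (GQAut.permLHom (I := I)) x p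
    rw [hxp] at this
    exact this.symm
  have hP : x.permP ^ p = 1 := by
    have := map_pow (GQAut.permPHom (I := I)) x p
    rw [hxp] at this
    exact this.symm
  haveI := hGQ.finP
  haveI := hGQ.finL
  constructor
  · rintro ⟨q, hq⟩ _ hnl
    have hiff : ∀ ℓ : L, I q ℓ ↔ I q (x.permL ℓ) := by
      intro ℓ
      conv_rhs => rw [← hq]
      exact (x.pres q ℓ).symm
    set σ : Equiv.Perm {ℓ : L // I q ℓ} := x.permL.subtypePerm (fun z => (hiff z).symm) with hσ
    have hσp : σ ^ p = 1 := by
      ext a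
      have h1 : ((σ ^ p) a : _) = (x.permL ^ p) a.1 := by
        rw [hσ, Equiv.Perm.subtypePerm_pow]; rfl
      rw [h1, hL]
      rfl
    have hσfix : ∀ ℓ : {ℓ : L // I q ℓ}, σ ℓ ≠ ℓ := by
      intro ℓ hc
      exact hnl ℓ.1 (congrArg Subtype.val hc)
    have := aux_perm_dvd hp σ hσp hσfix
    rwa [hGQ.pt_lines q] at this
  · rintro ⟨ℓ, hℓ⟩ _ hnp
    have hiff : ∀ q : P, I q ℓ ↔ I (x.permP q) ℓ := by
      intro q
      conv_rhs => rw [← hℓ]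
      exact (x.pres q ℓ).symm
    set σ : Equiv.Perm {q : P // I q ℓ} := x.permP.subtypePerm (fun z => (hiff z).symm) with hσ
    have hσp : σ ^ p = 1 := by
      ext a
      have h1 : ((σ ^ p) a : _) = (x.permP ^ p) a.1 := by
        rw [hσ, Equiv.Perm.subtypePerm_pow]; rfl
      rw [h1, hP]
      rfl
    have hσfix : ∀ q : {q : P // I q ℓ}, σ q ≠ q := by
      intro q hc
      exact hnp q.1 (congrArg Subtype.val hc)
    have := aux_perm_dvd hp σ hσp hσfix
    rwa [hGQ.line_pts ℓ] at this
end
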